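/- arXiv:1303.3677 — 5 statements merged into one kernel-verified Lean document; each statement's English description precedes it below -/
import Mathlib

section
/- Let a, b, c, d, a', b', c', d' be real numbers such that F((a,b),(c,d)) = F((a',b'),(c',d')) and this common value is nonzero. Then the linear span of {a·e₁ + b·e₂, a·e₃ + b·e₄} is different from the linear span of {c'·e₁ + d'·e₃, c'·e₂ + d'·e₄}. -/
/-- The standard basis vectors of `ℝ⁴` (as a Euclidean space). -/
noncomputable def e (i : Fin 4) : EuclideanSpace ℝ (Fin 4) := EuclideanSpace.single i 1

/-- `F ((a,b),(c,d)) = ac·e₁ + bc·e₂ + ad·e₃ + bd·e₄`. -/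
noncomputable def Fmap (a b c d : ℝ) : EuclideanSpace ℝ (Fin 4) :=
  (a * c) • e 0 + (b * c) • e 1 + (a * d) • e 2 + (b * d) • e 3

theorem stmt_3 (a b c d a' b' c' d' : ℝ)
    (heq : Fmap a b c d = Fmap a' b' c' d') (hne : Fmap a b c d ≠ 0) :
    Submodule.span ℝ ({a • e 0 + b • e 1, a • e 2 + b • e 3} :
        Set (EuclideanSpace ℝ (Fin 4))) ≠
      Submodule.span ℝ ({c' • e 0 + d' • e 2, c' • e 1 + d' • e 3} :
        Set (EuclideanSpace ℝ (Fin 4))) := by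
  intro h
  have hm1 : (a • e 0 + b • e 1 : EuclideanSpace ℝ (Fin 4)) ∈
      Submodule.span ℝ ({c' • e 0 + d' • e 2, c' • e 1 + d' • e 3} :
        Set (EuclideanSpace ℝ (Fin 4))) := by
    rw [← h]
    exact Submodule.subset_span (Set.mem_insert _ _)
  have hm2 : (a • e 2 + b • e 3 : EuclideanSpace ℝ (Fin 4)) ∈
      Submodule.span ℝ ({c' • e 0 + d' • e 2, c' • e 1 + d' • e 3} :
        Set (EuclideanSpace ℝ (Fin 4))) := by
    rw [← h]
    exact Submodule.subset_span (Set.mem_insert_of_mem _ rfl)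
  rw [Submodule.mem_span_pair] at hm1 hm2
  obtain ⟨x, y, hxy⟩ := hm1
  obtain ⟨u, v, huv⟩ := hm2
  -- coordinate equations
  have e1 := congrArg (fun v : EuclideanSpace ℝ (Fin 4) => v 0) hxy
  have e2 := congrArg (fun v : EuclideanSpace ℝ (Fin 4) => v 1) hxy
  have e3 := congrArg (fun v : EuclideanSpace ℝ (Fin 4) => v 2) hxy
  have e4 := congrArg (fun v : EuclideanSpace ℝ (Fin 4) => v 3) hxy
  have f1 := congrArg (fun v : EuclideanSpace ℝ (Fin 4) => v 0) huv
  have f2 := congrArg (fun v : EuclideanSpace ℝ (Fin 4) => v 1) huv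
  have f3 := congrArg (fun v : EuclideanSpace ℝ (Fin 4) => v 2) huv
  have f4 := congrArg (fun v : EuclideanSpace ℝ (Fin 4) => v 3) huv
  simp [e, EuclideanSpace.single_apply] at e1 e2 e3 e4 f1 f2 f3 f4
  have ha : a = 0 := by
    rcases eq_or_ne d' 0 with hd | hd
    · rw [hd] at f3; linarith
    · have hx : x = 0 := by
        have := e3; simp [hd] at this; linarith [this]
      rw [hx] at e1; linarith
  have hb : b = 0 := by
    rcases eq_or_ne d' 0 with hd | hd
    · rw [hd] at f4; linarith
    · have hy : y = 0 := by
        have := e4; simp [hd] at this; linarith [this]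
      rw [hy] at e2; linarith
  apply hne
  simp [Fmap, ha, hb]
end

section
/- Let w₁, w₂ be unit vectors in ℝ³ with third coordinate zero, and let S₁ = span{e₃, w₁} and S₂ = span{e₃, w₂} be the corresponding 2-dimensional subspaces of ℝ³ (both orthogonal to the plane {x₃ = 0}). Then for every continuously differentiable compactly supported vector field X : ℝ³ → ℝ³, ∫_{{x : x₃ ≥ 0}} (⟨e₃, DX(x) e₃⟩ + ⟨w₁, DX(x) w₁⟩) dx + ∫_{{x : x₃ ≤ 0}} (⟨e₃, DX(x) e₃⟩ + ⟨w₂, DX(x) w₂⟩) dx = 0, where dx is Lebesgue measure on ℝ³. (That is, the 2-varifold V = (L³∟{x₃ ≥ 0}) × δ_{S₁} + (L³∟{x₃ ≤ 0}) × δ_{S₂} is stationary.) -/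
open MeasureTheory
open scoped RealInnerProductSpace

/-- The standard basis vectors of `ℝ³` (as a Euclidean space). -/
noncomputable def e3 (i : Fin 3) : EuclideanSpace ℝ (Fin 3) := EuclideanSpace.single i 1

local notation "E3" => EuclideanSpace ℝ (Fin 3)

lemma key_lemma (f : E3 → ℝ) (hf : ContDiff ℝ 1 f) (hfc : HasCompactSupport f)
    (v : E3) (H : Set E3) (hH : MeasurableSet H)
    (hHv : ∀ (x : E3) (t : ℝ), x + t • v ∈ H ↔ x ∈ H) :
    ∫ x in H, fderiv ℝ f x v = 0 := by
  set μ := volume.restrict H with hμ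
  -- the translated integrals are constant
  have hconst : ∀ t : ℝ, ∫ x, f (x + t • v) ∂μ = ∫ x, f x ∂μ := by
    intro t
    have hind : H.indicator (fun x => f (x + t • v)) =
        fun x => H.indicator f (x + t • v) := by
      funext x
      by_cases hx : x ∈ H
      · rw [Set.indicator_of_mem hx, Set.indicator_of_mem ((hHv x t).2 hx)]
      · rw [Set.indicator_of_notMem hx,
          Set.indicator_of_notMem (fun h => hx ((hHv x t).1 h))]
    rw [hμ, ← integral_indicator hH, ← integral_indicator hH, hind,
      integral_add_right_eq_self (H.indicator f) (t • v)]
  have hfd : Differentiable ℝ f := hf.differentiable one_ne_zero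
  have hfderiv_cont : Continuous (fderiv ℝ f) := hf.continuous_fderiv one_ne_zero
  -- bound on the derivative
  obtain ⟨x₀, hx₀⟩ := (hfderiv_cont.norm).exists_forall_ge_of_hasCompactSupport
    ((hfc.fderiv ℝ).norm)
  set C := ‖fderiv ℝ f x₀‖
  set K := Metric.cthickening ‖v‖ (tsupport f) with hK
  have hKc : IsCompact K := hfc.cthickening
  have hKm : MeasurableSet K := hKc.isClosed.measurableSet
  set bound : E3 → ℝ := K.indicator (fun _ => C * ‖v‖) with hbdef
  have h_bound : ∀ (a : E3), ∀ t ∈ Metric.ball (0:ℝ) 1,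
      ‖fderiv ℝ f (a + t • v) v‖ ≤ bound a := by
    intro a t ht
    by_cases ha : a ∈ K
    · rw [hbdef, Set.indicator_of_mem ha]
      calc ‖fderiv ℝ f (a + t • v) v‖ ≤ ‖fderiv ℝ f (a + t • v)‖ * ‖v‖ :=
            (fderiv ℝ f (a + t • v)).le_opNorm v
        _ ≤ C * ‖v‖ := by
            apply mul_le_mul_of_nonneg_right (hx₀ _) (norm_nonneg v)
    · rw [hbdef, Set.indicator_of_notMem ha]
      have hnot : a + t • v ∉ tsupport f := by
        intro hmem
        apply ha
        rw [hK]
        apply Metric.mem_cthickening_of_dist_le a (a + t • v) _ _ hmem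
        have : dist a (a + t • v) = ‖t • v‖ := by
          rw [dist_eq_norm]; simp
        rw [this, norm_smul]
        have : ‖t‖ ≤ 1 := by
          rw [Metric.mem_ball, dist_zero_right] at ht; exact le_of_lt ht
        calc ‖t‖ * ‖v‖ ≤ 1 * ‖v‖ := mul_le_mul_of_nonneg_right this (norm_nonneg v)
          _ = ‖v‖ := one_mul _
      have hz : fderiv ℝ f (a + t • v) = 0 :=
        image_eq_zero_of_notMem_tsupport (fun h => hnot (tsupport_fderiv_subset ℝ h))
      simp [hz]
  have hmeas : ∀ t : ℝ, AEStronglyMeasurable (fun x : E3 => f (x + t • v)) μ := by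
    intro t
    exact (hf.continuous.comp (continuous_id.add continuous_const)).aestronglyMeasurable
  have hbint : Integrable bound μ := by
    apply Integrable.restrict
    rw [hbdef, integrable_indicator_iff hKm]
    exact integrableOn_const hKc.measure_lt_top.ne
  have hdiff : ∀ (a : E3), ∀ t ∈ Metric.ball (0:ℝ) 1,
      HasDerivAt (fun s : ℝ => f (a + s • v)) (fderiv ℝ f (a + t • v) v) t := by
    intro a t _
    have h1 : HasDerivAt (fun s : ℝ => a + s • v) v t := by
      simpa using ((hasDerivAt_id t).smul_const v).const_add a
    exact (hfd (a + t • v)).hasFDerivAt.comp_hasDerivAt t h1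
  have hint0 : Integrable (fun x : E3 => f (x + (0:ℝ) • v)) μ := by
    simp only [zero_smul, add_zero]
    exact (hf.continuous.integrable_of_hasCompactSupport hfc).restrict
  have hres := hasDerivAt_integral_of_dominated_loc_of_deriv_le
    (F := fun t (x : E3) => f (x + t • v))
    (F' := fun t (x : E3) => fderiv ℝ f (x + t • v) v) (x₀ := (0:ℝ))
    (bound := bound) (Metric.ball_mem_nhds 0 one_pos)
    (Filter.Eventually.of_forall hmeas) hint0
    (((hfderiv_cont.comp (continuous_id.add continuous_const : Continuous fun x : E3 => x + (0:ℝ) • v)).clm_apply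
      continuous_const).aestronglyMeasurable)
    (Filter.Eventually.of_forall h_bound) hbint
    (Filter.Eventually.of_forall hdiff)
  have hderiv := hres.2
  have hconst' : (fun t : ℝ => ∫ x, f (x + t • v) ∂μ) =
      fun _ : ℝ => ∫ x, f x ∂μ := funext hconst
  rw [hconst'] at hderiv
  have := hderiv.unique (hasDerivAt_const 0 _)
  simpa using this

lemma fderiv_inner_eq (X : E3 → E3) (hX : ContDiff ℝ 1 X) (w : E3) (x u : E3) :
    fderiv ℝ (fun y => ⟪w, X y⟫) x u = ⟪w, fderiv ℝ X x u⟫ := by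
  have h : HasFDerivAt (fun y => ⟪w, X y⟫)
      ((innerSL ℝ w).comp (fderiv ℝ X x)) x :=
    (innerSL ℝ w).hasFDerivAt.comp x (hX.differentiable one_ne_zero x).hasFDerivAt
  rw [h.fderiv]
  rfl

theorem stmt_8 (w₁ w₂ : EuclideanSpace ℝ (Fin 3))
    (hw₁ : ‖w₁‖ = 1) (hw₂ : ‖w₂‖ = 1) (hw₁3 : w₁ 2 = 0) (hw₂3 : w₂ 2 = 0)
    (X : EuclideanSpace ℝ (Fin 3) → EuclideanSpace ℝ (Fin 3))
    (hX : ContDiff ℝ 1 X) (hXc : HasCompactSupport X) :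
    (∫ x in {x : EuclideanSpace ℝ (Fin 3) | 0 ≤ x 2},
        (⟪e3 2, fderiv ℝ X x (e3 2)⟫ + ⟪w₁, fderiv ℝ X x w₁⟫))
    + (∫ x in {x : EuclideanSpace ℝ (Fin 3) | x 2 ≤ 0},
        (⟪e3 2, fderiv ℝ X x (e3 2)⟫ + ⟪w₂, fderiv ℝ X x w₂⟫)) = 0 := by
  set Hp : Set E3 := {x : E3 | 0 ≤ x 2} with hHp
  set Hm : Set E3 := {x : E3 | x 2 ≤ 0} with hHm
  have hHpm : MeasurableSet Hp := by
    apply measurableSet_le measurable_const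
    exact (continuous_apply (2 : Fin 3)).comp (PiLp.continuous_ofLp (p := 2) (β := fun _ : Fin 3 => ℝ)) |>.measurable
  have hHmm : MeasurableSet Hm := by
    apply measurableSet_le
    · exact (continuous_apply (2 : Fin 3)).comp (PiLp.continuous_ofLp (p := 2) (β := fun _ : Fin 3 => ℝ)) |>.measurable
    · exact measurable_const
  -- properties of the inner-product scalar functions
  have hfw : ∀ w : E3, ContDiff ℝ 1 (fun y => ⟪w, X y⟫) := fun w =>
    (innerSL ℝ w).contDiff.comp hX
  have hfwc : ∀ w : E3, HasCompactSupport (fun y => ⟪w, X y⟫) := fun w =>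
    hXc.comp_left (inner_zero_right w)
  -- invariance of the half spaces under tangential translations
  have hinv : ∀ (w : E3), w 2 = 0 → ∀ (H : Set E3),
      (H = Hp ∨ H = Hm) → ∀ (x : E3) (t : ℝ), x + t • w ∈ H ↔ x ∈ H := by
    intro w hw H hH x t
    have hcoord : (x + t • w) 2 = x 2 := by
      simp [PiLp.add_apply, PiLp.smul_apply, hw]
    rcases hH with rfl | rfl <;> simp [hHp, hHm, Set.mem_setOf_eq, hcoord]
  -- the tangential integrals vanish
  have htang : ∀ (w : E3), w 2 = 0 → ∀ (H : Set E3), MeasurableSet H →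
      (H = Hp ∨ H = Hm) → ∫ x in H, ⟪w, fderiv ℝ X x w⟫ = 0 := by
    intro w hw H hm hH
    have := key_lemma (fun y => ⟪w, X y⟫) (hfw w) (hfwc w) w H hm (hinv w hw H hH)
    rw [← this]
    exact setIntegral_congr_fun hm (fun x _ => (fderiv_inner_eq X hX w x w).symm)
  -- the normal part
  have hA : ∀ (H : Set E3), MeasurableSet H →
      (∀ (x : E3) (t : ℝ), x + t • e3 2 ∈ H ↔ x ∈ H) →
      ∫ x in H, ⟪e3 2, fderiv ℝ X x (e3 2)⟫ = 0 := by
    intro H hm hin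
    have := key_lemma (fun y => ⟪e3 2, X y⟫) (hfw _) (hfwc _) (e3 2) H hm hin
    rw [← this]
    exact setIntegral_congr_fun hm (fun x _ => (fderiv_inner_eq X hX _ x _).symm)
  -- integrability facts
  have hfdc : Continuous (fderiv ℝ X) := hX.continuous_fderiv one_ne_zero
  have hintA : ∀ u : E3, Integrable (fun x : E3 => ⟪u, fderiv ℝ X x u⟫) volume := by
    intro u
    apply Continuous.integrable_of_hasCompactSupport
    · exact continuous_const.inner (hfdc.clm_apply continuous_const)
    · exact (hXc.fderiv ℝ).comp_left (g := fun L : E3 →L[ℝ] E3 => ⟪u, L u⟫) (by simp)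
  -- measure of the separating plane
  have hplane : volume ({x : E3 | x 2 = 0}) = 0 := by
    have hset : {x : E3 | x 2 = 0} =
        ↑(LinearMap.ker ((EuclideanSpace.proj (2 : Fin 3) : E3 →L[ℝ] ℝ) : E3 →ₗ[ℝ] ℝ)) := by
      ext x
      simp [LinearMap.mem_ker, PiLp.proj_apply, EuclideanSpace.single_apply]
    rw [hset]
    apply Measure.addHaar_submodule
    intro h
    have : (EuclideanSpace.single (2 : Fin 3) (1:ℝ)) ∈
        LinearMap.ker ((EuclideanSpace.proj (2 : Fin 3) : E3 →L[ℝ] ℝ) : E3 →ₗ[ℝ] ℝ) := by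
      rw [h]; trivial
    simp [LinearMap.mem_ker, PiLp.proj_apply, EuclideanSpace.single_apply] at this
  -- split the integrals
  rw [integral_add ((hintA _).integrableOn) ((hintA _).integrableOn),
      integral_add ((hintA _).integrableOn) ((hintA _).integrableOn),
      htang w₁ hw₁3 Hp hHpm (Or.inl rfl), htang w₂ hw₂3 Hm hHmm (Or.inr rfl),
      add_zero, add_zero]
  have hunion : Hp ∪ Hm = Set.univ := by
    ext x; simp [hHp, hHm, Set.mem_setOf_eq, le_total]
  have hdisj : AEDisjoint volume Hp Hm := by
    apply measure_mono_null _ hplane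
    intro x hx
    exact le_antisymm hx.2 hx.1
  have hsum : (∫ x in Hp, ⟪e3 2, fderiv ℝ X x (e3 2)⟫)
      + (∫ x in Hm, ⟪e3 2, fderiv ℝ X x (e3 2)⟫)
      = ∫ x in Hp ∪ Hm, ⟪e3 2, fderiv ℝ X x (e3 2)⟫ :=
    (integral_union_ae hdisj hHmm.nullMeasurableSet
      ((hintA _).integrableOn) ((hintA _).integrableOn)).symm
  rw [hsum, hunion, setIntegral_univ]
  rw [← setIntegral_univ]
  exact hA Set.univ MeasurableSet.univ (fun x t => by simp)
end

section
/- Let d > 0, α₀ ∈ ℝ, and define r(α) = √(d / cos(2(α − α₀))) for α with |α − α₀| < π/4. Then r is twice differentiable on this interval, with r'(α) = √d · (cos(2(α−α₀)))^{−3/2} · sin(2(α−α₀)), and r satisfies the differential equation r(α)·r''(α) − 3·(r'(α))² − 2·(r(α))² = 0 for all α with |α − α₀| < π/4. -/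
open Real

theorem stmt_9 (d α₀ : ℝ) (hd : 0 < d) :
    ∀ α : ℝ, |α - α₀| < π / 4 →
      HasDerivAt (fun a => Real.sqrt (d / Real.cos (2 * (a - α₀))))
        (Real.sqrt d * Real.cos (2 * (α - α₀)) ^ (-(3 : ℝ) / 2) *
          Real.sin (2 * (α - α₀))) α ∧
      ∃ r'' : ℝ,
        HasDerivAt
          (fun a => Real.sqrt d * Real.cos (2 * (a - α₀)) ^ (-(3 : ℝ) / 2) *
            Real.sin (2 * (a - α₀))) r'' α ∧
        Real.sqrt (d / Real.cos (2 * (α - α₀))) * r''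
            - 3 * (Real.sqrt d * Real.cos (2 * (α - α₀)) ^ (-(3 : ℝ) / 2) *
                Real.sin (2 * (α - α₀))) ^ 2
            - 2 * Real.sqrt (d / Real.cos (2 * (α - α₀))) ^ 2 = 0 := by
  intro α hα
  set c : ℝ := Real.cos (2 * (α - α₀)) with hcdef
  set s : ℝ := Real.sin (2 * (α - α₀)) with hsdef
  have hc : 0 < c := by
    apply Real.cos_pos_of_mem_Ioo
    constructor
    · have := neg_abs_le (α - α₀)
      nlinarith [abs_nonneg (α - α₀), abs_le.mp hα.le]
    · nlinarith [abs_le.mp hα.le, le_abs_self (α - α₀)]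
  have hsc : 0 < Real.sqrt c := Real.sqrt_pos.mpr hc
  have hsd : 0 < Real.sqrt d := Real.sqrt_pos.mpr hd
  have hcc : Real.sqrt c * Real.sqrt c = c := Real.mul_self_sqrt hc.le
  have hdd : Real.sqrt d * Real.sqrt d = d := Real.mul_self_sqrt hd.le
  have hs2 : s ^ 2 = 1 - c ^ 2 := by
    have := Real.sin_sq_add_cos_sq (2 * (α - α₀)); rw [← hcdef, ← hsdef] at this; linarith
  -- derivative of inner cos
  have hu : HasDerivAt (fun a : ℝ => 2 * (a - α₀)) 2 α := by
    simpa using ((hasDerivAt_id α).sub_const α₀).const_mul 2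
  have hcos : HasDerivAt (fun a : ℝ => Real.cos (2 * (a - α₀))) (-s * 2) α :=
    by have := (Real.hasDerivAt_cos (2 * (α - α₀))).comp α hu; exact this
  have hsin : HasDerivAt (fun a : ℝ => Real.sin (2 * (a - α₀))) (c * 2) α :=
    by have := (Real.hasDerivAt_sin (2 * (α - α₀))).comp α hu; exact this
  -- rpow facts
  have hr32 : c ^ (-(3 : ℝ) / 2) = (c * Real.sqrt c)⁻¹ := by
    rw [show (-(3 : ℝ) / 2) = -((3 : ℝ) / 2) by ring, Real.rpow_neg hc.le,
      show ((3 : ℝ) / 2) = 1 + 1 / 2 by ring, Real.rpow_add hc, Real.rpow_one,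
      ← Real.sqrt_eq_rpow]
  have hr52 : c ^ ((-(3 : ℝ) / 2) - 1) = (c ^ 2 * Real.sqrt c)⁻¹ := by
    rw [show ((-(3 : ℝ) / 2) - 1) = -((5 : ℝ) / 2) by ring, Real.rpow_neg hc.le,
      show ((5 : ℝ) / 2) = 2 + 1 / 2 by ring, Real.rpow_add hc, ← Real.sqrt_eq_rpow,
      show ((2 : ℝ) : ℝ) = ((2 : ℕ) : ℝ) by norm_num, Real.rpow_natCast]
  have hsqrtdiv : Real.sqrt (d / c) = Real.sqrt d / Real.sqrt c := Real.sqrt_div hd.le c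
  -- first derivative
  have hg : HasDerivAt (fun a : ℝ => d / Real.cos (2 * (a - α₀)))
      (-(d * (-s * 2)) / c ^ 2) α := by
    have := (hasDerivAt_const α d).div hcos hc.ne'
    simp only [zero_mul, zero_sub] at this
    exact this
  have h1 : HasDerivAt (fun a => Real.sqrt (d / Real.cos (2 * (a - α₀))))
      (Real.sqrt d * c ^ (-(3 : ℝ) / 2) * s) α := by
    have := hg.sqrt (by positivity)
    convert this using 1
    rw [hr32, hsqrtdiv]
    field_simp
    linear_combination (c*s)*hdd - (s*d)*hcc
  refine ⟨h1, ?_⟩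
  -- second derivative
  have h2 : HasDerivAt (fun a : ℝ => Real.cos (2 * (a - α₀)) ^ (-(3 : ℝ) / 2))
      ((-s * 2) * (-(3 : ℝ) / 2) * c ^ ((-(3 : ℝ) / 2) - 1)) α :=
    hcos.rpow_const (Or.inl hc.ne')
  have h3 : HasDerivAt
      (fun a => Real.sqrt d * Real.cos (2 * (a - α₀)) ^ (-(3 : ℝ) / 2) *
        Real.sin (2 * (a - α₀)))
      ((Real.sqrt d * ((-s * 2) * (-(3 : ℝ) / 2) * c ^ ((-(3 : ℝ) / 2) - 1))) * s
        + (Real.sqrt d * c ^ (-(3 : ℝ) / 2)) * (c * 2)) α :=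
    (h2.const_mul (Real.sqrt d)).mul hsin
  refine ⟨_, h3, ?_⟩
  rw [hr32, hr52, hsqrtdiv]
  field_simp
  linear_combination
end

section
/- Let d > 0, α₀ ∈ ℝ, r(α) = √(d / cos(2(α−α₀))) for |α − α₀| < π/4, and U(α,β) = r(α)·(cos α cos β, sin α cos β, cos α sin β, sin α sin β) ∈ ℝ⁴. Then at every point (α,β) with |α − α₀| < π/4, the vector (1/((r'(α))² + (r(α))²)) · ∂²U/∂α²(α,β) + (1/(r(α))²) · ∂²U/∂β²(α,β) belongs to the linear span of ∂U/∂α(α,β) and ∂U/∂β(α,β). (This expresses that the mean curvature vector of the surface parameterized by U vanishes, i.e., U parameterizes a minimal surface.) -/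
open Real

/-- `r^{d,α₀}(α) = √(d / cos(2(α−α₀)))`. -/
noncomputable def rr (d α₀ α : ℝ) : ℝ := Real.sqrt (d / Real.cos (2 * (α - α₀)))

/-- The surface parameterization
`U(α,β) = r(α)·(cos α cos β, sin α cos β, cos α sin β, sin α sin β)`. -/
noncomputable def U (d α₀ α β : ℝ) : EuclideanSpace ℝ (Fin 4) :=
  rr d α₀ α •
    (WithLp.toLp 2 ![Real.cos α * Real.cos β, Real.sin α * Real.cos β,
       Real.cos α * Real.sin β, Real.sin α * Real.sin β] :
      EuclideanSpace ℝ (Fin 4))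

/-- The derivative of `rr d α₀`. -/
noncomputable def R1 (d α₀ a : ℝ) : ℝ :=
  d * Real.sin (2 * (a - α₀)) / ((Real.cos (2 * (a - α₀)))^2 * rr d α₀ a)

/-- `∂U/∂α`. -/
noncomputable def Ua (d α₀ a β : ℝ) : EuclideanSpace ℝ (Fin 4) :=
  WithLp.toLp 2 ![(R1 d α₀ a * Real.cos a - rr d α₀ a * Real.sin a) * Real.cos β,
    (R1 d α₀ a * Real.sin a + rr d α₀ a * Real.cos a) * Real.cos β,
    (R1 d α₀ a * Real.cos a - rr d α₀ a * Real.sin a) * Real.sin β,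
    (R1 d α₀ a * Real.sin a + rr d α₀ a * Real.cos a) * Real.sin β]

/-- `∂²U/∂α²`, with `Q = r'' = (2r² + 3r'²)/r`. -/
noncomputable def Uaa (d α₀ a β : ℝ) : EuclideanSpace ℝ (Fin 4) :=
  WithLp.toLp 2 ![(((2 * rr d α₀ a ^ 2 + 3 * R1 d α₀ a ^ 2) / rr d α₀ a) * Real.cos a
      - 2 * R1 d α₀ a * Real.sin a - rr d α₀ a * Real.cos a) * Real.cos β,
    (((2 * rr d α₀ a ^ 2 + 3 * R1 d α₀ a ^ 2) / rr d α₀ a) * Real.sin a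
      + 2 * R1 d α₀ a * Real.cos a - rr d α₀ a * Real.sin a) * Real.cos β,
    (((2 * rr d α₀ a ^ 2 + 3 * R1 d α₀ a ^ 2) / rr d α₀ a) * Real.cos a
      - 2 * R1 d α₀ a * Real.sin a - rr d α₀ a * Real.cos a) * Real.sin β,
    (((2 * rr d α₀ a ^ 2 + 3 * R1 d α₀ a ^ 2) / rr d α₀ a) * Real.sin a
      + 2 * R1 d α₀ a * Real.cos a - rr d α₀ a * Real.sin a) * Real.sin β]

/-- `∂U/∂β`. -/
noncomputable def Ub (d α₀ α b : ℝ) : EuclideanSpace ℝ (Fin 4) :=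
  WithLp.toLp 2 ![rr d α₀ α * (Real.cos α * (-Real.sin b)),
    rr d α₀ α * (Real.sin α * (-Real.sin b)),
    rr d α₀ α * (Real.cos α * Real.cos b),
    rr d α₀ α * (Real.sin α * Real.cos b)]

/-- `∂²U/∂β²`. -/
noncomputable def Ubb (d α₀ α b : ℝ) : EuclideanSpace ℝ (Fin 4) :=
  WithLp.toLp 2 ![rr d α₀ α * (Real.cos α * (-Real.cos b)),
    rr d α₀ α * (Real.sin α * (-Real.cos b)),
    rr d α₀ α * (Real.cos α * (-Real.sin b)),
    rr d α₀ α * (Real.sin α * (-Real.sin b))]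

lemma hasDerivAt_E4 {f : ℝ → EuclideanSpace ℝ (Fin 4)} {f' : EuclideanSpace ℝ (Fin 4)} {x : ℝ}
    (h : ∀ i, HasDerivAt (fun t => f t i) (f' i) x) : HasDerivAt f f' x := by
  let e := EuclideanSpace.equiv (Fin 4) ℝ
  have h1 : HasDerivAt (fun t => e (f t)) (e f') x := hasDerivAt_pi.2 h
  have h2 := ((e.symm : (Fin 4 → ℝ) →L[ℝ] EuclideanSpace ℝ (Fin 4)).hasFDerivAt).comp_hasDerivAt
    x h1
  have h3 : ((e.symm : (Fin 4 → ℝ) →L[ℝ] EuclideanSpace ℝ (Fin 4)) ∘ fun t => e (f t)) = f := by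
    funext t; simp
  rw [h3] at h2
  simpa using h2

variable {d α₀ a : ℝ}

lemma cos2_pos (h : |a - α₀| < π / 4) : 0 < Real.cos (2 * (a - α₀)) := by
  apply Real.cos_pos_of_mem_Ioo
  rw [abs_lt] at h
  constructor <;> [nlinarith; nlinarith]

lemma rr_pos (hd : 0 < d) (h : |a - α₀| < π / 4) : 0 < rr d α₀ a :=
  Real.sqrt_pos.2 (div_pos hd (cos2_pos h))

lemma rr_sq (hd : 0 < d) (h : |a - α₀| < π / 4) :
    rr d α₀ a ^ 2 = d / Real.cos (2 * (a - α₀)) :=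
  Real.sq_sqrt (le_of_lt (div_pos hd (cos2_pos h)))

lemma hasDerivAt_lin : HasDerivAt (fun a : ℝ => 2 * (a - α₀)) 2 a := by
  simpa using ((hasDerivAt_id a).sub_const α₀).const_mul 2

lemma hasDerivAt_rr (hd : 0 < d) (h : |a - α₀| < π / 4) :
    HasDerivAt (rr d α₀) (R1 d α₀ a) a := by
  have hc := cos2_pos h
  have hr := rr_pos hd h
  have hcos : HasDerivAt (fun a : ℝ => Real.cos (2 * (a - α₀)))
      (-Real.sin (2 * (a - α₀)) * 2) a := hasDerivAt_lin.cos
  have hq : HasDerivAt (fun a : ℝ => d / Real.cos (2 * (a - α₀)))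
      ((0 * Real.cos (2 * (a - α₀)) - d * (-Real.sin (2 * (a - α₀)) * 2)) /
        (Real.cos (2 * (a - α₀)))^2) a :=
    (hasDerivAt_const a d).div hcos hc.ne'
  have hne : d / Real.cos (2 * (a - α₀)) ≠ 0 := (div_pos hd hc).ne'
  have := hq.sqrt hne
  refine this.congr_deriv ?_
  unfold R1 rr
  have h1 : Real.sqrt (d / Real.cos (2 * (a - α₀))) ≠ 0 :=
    (Real.sqrt_pos.2 (div_pos hd hc)).ne'
  field_simp
  ring

lemma R1_eq (hd : 0 < d) (h : |a - α₀| < π / 4) :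
    R1 d α₀ a = rr d α₀ a * Real.sin (2 * (a - α₀)) / Real.cos (2 * (a - α₀)) := by
  have hc := cos2_pos h
  have hr := rr_pos hd h
  have hd2 : d = Real.cos (2 * (a - α₀)) * rr d α₀ a ^ 2 := by
    rw [rr_sq hd h]; field_simp
  unfold R1
  set r := rr d α₀ a with hrr
  rw [hd2]
  field_simp

lemma hasDerivAt_R1 (hd : 0 < d) (h : |a - α₀| < π / 4) :
    HasDerivAt (R1 d α₀)
      ((2 * rr d α₀ a ^ 2 + 3 * R1 d α₀ a ^ 2) / rr d α₀ a) a := by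
  have hc := cos2_pos h
  have hr := rr_pos hd h
  have hcos : HasDerivAt (fun a : ℝ => Real.cos (2 * (a - α₀)))
      (-Real.sin (2 * (a - α₀)) * 2) a := hasDerivAt_lin.cos
  have hsin : HasDerivAt (fun a : ℝ => Real.sin (2 * (a - α₀)))
      (Real.cos (2 * (a - α₀)) * 2) a := hasDerivAt_lin.sin
  have hn : HasDerivAt (fun a : ℝ => d * Real.sin (2 * (a - α₀)))
      (d * (Real.cos (2 * (a - α₀)) * 2)) a := hsin.const_mul d
  have hm : HasDerivAt (fun a : ℝ => (Real.cos (2 * (a - α₀)))^2 * rr d α₀ a)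
      ((2 * Real.cos (2 * (a - α₀)) ^ 1 * (-Real.sin (2 * (a - α₀)) * 2)) * rr d α₀ a
        + (Real.cos (2 * (a - α₀)))^2 * R1 d α₀ a) a :=
    (hcos.pow 2).mul (hasDerivAt_rr hd h)
  have hmne : (Real.cos (2 * (a - α₀)))^2 * rr d α₀ a ≠ 0 := by positivity
  have := hn.div hm hmne
  refine this.congr_deriv ?_
  have hd2 : d = Real.cos (2 * (a - α₀)) * rr d α₀ a ^ 2 := by
    rw [rr_sq hd h]; field_simp
  rw [R1_eq hd h]
  set r := rr d α₀ a with hrr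
  rw [hd2]
  field_simp
  ring

lemma hasDerivAt_U_alpha (hd : 0 < d) (h : |a - α₀| < π / 4) (β : ℝ) :
    HasDerivAt (fun a => U d α₀ a β) (Ua d α₀ a β) a := by
  apply hasDerivAt_E4
  intro i
  fin_cases i
  · show HasDerivAt (fun t => rr d α₀ t * (Real.cos t * Real.cos β))
      ((R1 d α₀ a * Real.cos a - rr d α₀ a * Real.sin a) * Real.cos β) a
    have := (hasDerivAt_rr hd h).mul ((Real.hasDerivAt_cos a).mul_const (Real.cos β))
    refine this.congr_deriv ?_; ring
  · show HasDerivAt (fun t => rr d α₀ t * (Real.sin t * Real.cos β))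
      ((R1 d α₀ a * Real.sin a + rr d α₀ a * Real.cos a) * Real.cos β) a
    have := (hasDerivAt_rr hd h).mul ((Real.hasDerivAt_sin a).mul_const (Real.cos β))
    refine this.congr_deriv ?_; ring
  · show HasDerivAt (fun t => rr d α₀ t * (Real.cos t * Real.sin β))
      ((R1 d α₀ a * Real.cos a - rr d α₀ a * Real.sin a) * Real.sin β) a
    have := (hasDerivAt_rr hd h).mul ((Real.hasDerivAt_cos a).mul_const (Real.sin β))
    refine this.congr_deriv ?_; ring
  · show HasDerivAt (fun t => rr d α₀ t * (Real.sin t * Real.sin β))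
      ((R1 d α₀ a * Real.sin a + rr d α₀ a * Real.cos a) * Real.sin β) a
    have := (hasDerivAt_rr hd h).mul ((Real.hasDerivAt_sin a).mul_const (Real.sin β))
    refine this.congr_deriv ?_; ring

lemma hasDerivAt_Ua (hd : 0 < d) (h : |a - α₀| < π / 4) (β : ℝ) :
    HasDerivAt (fun a => Ua d α₀ a β) (Uaa d α₀ a β) a := by
  apply hasDerivAt_E4
  intro i
  have h1 : HasDerivAt (fun t => R1 d α₀ t * Real.cos t - rr d α₀ t * Real.sin t)
      (((2 * rr d α₀ a ^ 2 + 3 * R1 d α₀ a ^ 2) / rr d α₀ a) * Real.cos a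
        - 2 * R1 d α₀ a * Real.sin a - rr d α₀ a * Real.cos a) a := by
    have := ((hasDerivAt_R1 hd h).mul (Real.hasDerivAt_cos a)).sub
      ((hasDerivAt_rr hd h).mul (Real.hasDerivAt_sin a))
    refine this.congr_deriv ?_; ring
  have h2 : HasDerivAt (fun t => R1 d α₀ t * Real.sin t + rr d α₀ t * Real.cos t)
      (((2 * rr d α₀ a ^ 2 + 3 * R1 d α₀ a ^ 2) / rr d α₀ a) * Real.sin a
        + 2 * R1 d α₀ a * Real.cos a - rr d α₀ a * Real.sin a) a := by
    have := ((hasDerivAt_R1 hd h).mul (Real.hasDerivAt_sin a)).add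
      ((hasDerivAt_rr hd h).mul (Real.hasDerivAt_cos a))
    refine this.congr_deriv ?_; ring
  fin_cases i
  · exact h1.mul_const (Real.cos β)
  · exact h2.mul_const (Real.cos β)
  · exact h1.mul_const (Real.sin β)
  · exact h2.mul_const (Real.sin β)

lemma hasDerivAt_U_beta (α b : ℝ) :
    HasDerivAt (fun b => U d α₀ α b) (Ub d α₀ α b) b := by
  apply hasDerivAt_E4
  intro i
  fin_cases i
  · exact (((Real.hasDerivAt_cos b).const_mul (Real.cos α)).const_mul (rr d α₀ α))
  · exact (((Real.hasDerivAt_cos b).const_mul (Real.sin α)).const_mul (rr d α₀ α))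
  · exact (((Real.hasDerivAt_sin b).const_mul (Real.cos α)).const_mul (rr d α₀ α))
  · exact (((Real.hasDerivAt_sin b).const_mul (Real.sin α)).const_mul (rr d α₀ α))

lemma hasDerivAt_Ub (α b : ℝ) :
    HasDerivAt (fun b => Ub d α₀ α b) (Ubb d α₀ α b) b := by
  apply hasDerivAt_E4
  intro i
  fin_cases i
  · show HasDerivAt (fun t => rr d α₀ α * (Real.cos α * (-Real.sin t)))
      (rr d α₀ α * (Real.cos α * (-Real.cos b))) b
    exact ((((Real.hasDerivAt_sin b).neg).const_mul (Real.cos α)).const_mul (rr d α₀ α))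
  · show HasDerivAt (fun t => rr d α₀ α * (Real.sin α * (-Real.sin t)))
      (rr d α₀ α * (Real.sin α * (-Real.cos b))) b
    exact ((((Real.hasDerivAt_sin b).neg).const_mul (Real.sin α)).const_mul (rr d α₀ α))
  · show HasDerivAt (fun t => rr d α₀ α * (Real.cos α * Real.cos t))
      (rr d α₀ α * (Real.cos α * (-Real.sin b))) b
    exact (((Real.hasDerivAt_cos b).const_mul (Real.cos α)).const_mul (rr d α₀ α))
  · show HasDerivAt (fun t => rr d α₀ α * (Real.sin α * Real.cos t))
      (rr d α₀ α * (Real.sin α * (-Real.sin b))) b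
    exact (((Real.hasDerivAt_cos b).const_mul (Real.sin α)).const_mul (rr d α₀ α))

theorem stmt_10 (d α₀ : ℝ) (hd : 0 < d) (α β : ℝ) (hα : |α - α₀| < π / 4) :
    ((deriv (rr d α₀) α) ^ 2 + (rr d α₀ α) ^ 2)⁻¹ •
        deriv (deriv (fun a => U d α₀ a β)) α
      + ((rr d α₀ α) ^ 2)⁻¹ • deriv (deriv (fun b => U d α₀ α b)) β
    ∈ Submodule.span ℝ
        ({deriv (fun a => U d α₀ a β) α, deriv (fun b => U d α₀ α b) β} :
          Set (EuclideanSpace ℝ (Fin 4))) := by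
  have hr := rr_pos hd hα
  -- rewrite first derivatives
  have hda : deriv (fun a => U d α₀ a β) α = Ua d α₀ α β :=
    (hasDerivAt_U_alpha hd hα β).deriv
  have hdb : deriv (fun b => U d α₀ α b) β = Ub d α₀ α β :=
    (hasDerivAt_U_beta α β).deriv
  have hdrr : deriv (rr d α₀) α = R1 d α₀ α := (hasDerivAt_rr hd hα).deriv
  -- second derivative in β
  have hdbb : deriv (deriv (fun b => U d α₀ α b)) β = Ubb d α₀ α β := by
    have : deriv (fun b => U d α₀ α b) = fun b => Ub d α₀ α b := by
      funext b; exact (hasDerivAt_U_beta α b).deriv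
    rw [this]
    exact (hasDerivAt_Ub α β).deriv
  -- second derivative in α
  have hdaa : deriv (deriv (fun a => U d α₀ a β)) α = Uaa d α₀ α β := by
    have hS : IsOpen {a : ℝ | |a - α₀| < π / 4} := by
      have : Continuous fun a : ℝ => |a - α₀| := (continuous_id.sub continuous_const).abs
      exact isOpen_lt this continuous_const
    have hev : deriv (fun a => U d α₀ a β) =ᶠ[nhds α] fun a => Ua d α₀ a β := by
      filter_upwards [hS.mem_nhds hα] with a ha
      exact (hasDerivAt_U_alpha hd ha β).deriv
    rw [hev.deriv_eq]
    exact (hasDerivAt_Ua hd hα β).deriv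
  rw [hda, hdb, hdrr, hdaa, hdbb]
  -- the combination is a multiple of Ua
  have key : ((R1 d α₀ α) ^ 2 + (rr d α₀ α) ^ 2)⁻¹ • Uaa d α₀ α β
      + ((rr d α₀ α) ^ 2)⁻¹ • Ubb d α₀ α β
      = (2 * R1 d α₀ α / (rr d α₀ α * ((R1 d α₀ α) ^ 2 + (rr d α₀ α) ^ 2))) • Ua d α₀ α β := by
    have hpos : (0:ℝ) < (R1 d α₀ α) ^ 2 + (rr d α₀ α) ^ 2 := by positivity
    ext i
    fin_cases i <;>
    · simp only [PiLp.add_apply, PiLp.smul_apply, smul_eq_mul, Uaa, Ubb, Ua,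
        Matrix.cons_val_zero, Matrix.cons_val_one, Matrix.head_cons, Fin.isValue,
        Matrix.cons_val_two, Matrix.tail_cons, Matrix.cons_val_three, Matrix.cons_val_zero', Matrix.cons_val_succ']
      field_simp
      ring
  rw [key]
  exact Submodule.smul_mem _ _ (Submodule.subset_span (Set.mem_insert _ _))
end

section
/- Let d > 0 and let α₁ ≤ α ≤ α₂ be real numbers with α − α₁ = α₂ − α ∈ [0, π/4). Then for every β ∈ ℝ: (i) U^{d,α₁}(α,β) = U^{d,α₂}(α,β); and (ii) N(∂U^{d,α₁}/∂α (α,β)) − N(∂U^{d,α₂}/∂α (α,β)) = 2·sin(2(α−α₁)) · N(U^{d,α₁}(α,β)), i.e., the difference of the two unit co-normals is the radial vector at the point scaled by 2 sin(2(α−α₁)). -/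
open Real

/-- Radial unit vector `N(x) = x / ‖x‖`. -/
noncomputable def N (x : EuclideanSpace ℝ (Fin 4)) : EuclideanSpace ℝ (Fin 4) :=
  ‖x‖⁻¹ • x

noncomputable def vv (α β : ℝ) : EuclideanSpace ℝ (Fin 4) :=
  WithLp.toLp 2 ![Real.cos α * Real.cos β, Real.sin α * Real.cos β,
    Real.cos α * Real.sin β, Real.sin α * Real.sin β]

noncomputable def vp (α β : ℝ) : EuclideanSpace ℝ (Fin 4) :=
  WithLp.toLp 2 ![-Real.sin α * Real.cos β, Real.cos α * Real.cos β,
    -Real.sin α * Real.sin β, Real.cos α * Real.sin β]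

lemma U_eq (d α₀ α β : ℝ) : U d α₀ α β = rr d α₀ α • vv α β := rfl

lemma normv (a b α β : ℝ) :
    ‖(a • vv α β + b • vp α β : EuclideanSpace ℝ (Fin 4))‖ = Real.sqrt (a ^ 2 + b ^ 2) := by
  rw [EuclideanSpace.norm_eq]
  congr 1
  have h1 := Real.sin_sq_add_cos_sq α
  have h2 := Real.sin_sq_add_cos_sq β
  simp [vv, vp, Fin.sum_univ_four, Real.norm_eq_abs, sq_abs]
  linear_combination (a^2+b^2)*(Real.sin β^2 + Real.cos β^2)*h1 + (a^2+b^2)*h2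

lemma hasDerivAt_vv (α β : ℝ) :
    HasDerivAt (fun a => vv a β) (vp α β) α := by
  have e := (EuclideanSpace.equiv (Fin 4) ℝ).symm
  have hp : HasDerivAt
      (fun a => (fun i => (![Real.cos a * Real.cos β, Real.sin a * Real.cos β,
        Real.cos a * Real.sin β, Real.sin a * Real.sin β] : Fin 4 → ℝ) i))
      (fun i => (![-Real.sin α * Real.cos β, Real.cos α * Real.cos β,
        -Real.sin α * Real.sin β, Real.cos α * Real.sin β] : Fin 4 → ℝ) i) α := by
    rw [hasDerivAt_pi]
    intro i
    fin_cases i <;> simp <;>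
      first
        | exact (Real.hasDerivAt_sin α).mul_const _
        | simpa [neg_mul] using (Real.hasDerivAt_cos α).mul_const _
  have := ((EuclideanSpace.equiv (Fin 4) ℝ).symm :
      (Fin 4 → ℝ) →L[ℝ] EuclideanSpace ℝ (Fin 4)).hasFDerivAt.comp_hasDerivAt α hp
  exact this

lemma deriv_U (d α₀ α β : ℝ) (hd : 0 < d) (hc : 0 < Real.cos (2 * (α - α₀))) :
    deriv (fun a => U d α₀ a β) α =
      (Real.sqrt d / (Real.sqrt (Real.cos (2 * (α - α₀))) * Real.cos (2 * (α - α₀)))) •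
        (Real.sin (2 * (α - α₀)) • vv α β + Real.cos (2 * (α - α₀)) • vp α β) := by
  set c := Real.cos (2 * (α - α₀)) with hcdef
  set s := Real.sin (2 * (α - α₀)) with hsdef
  have hsc : Real.sqrt c ≠ 0 := by positivity
  have hcne : c ≠ 0 := ne_of_gt hc
  have h1 : HasDerivAt (fun a => 2 * (a - α₀)) 2 α := by
    simpa using ((hasDerivAt_id α).sub_const α₀).const_mul 2
  have hg : HasDerivAt (fun a => Real.cos (2 * (a - α₀))) (-s * 2) α := by
    exact ((Real.hasDerivAt_cos (2 * (α - α₀))).comp α h1).congr_deriv (g' := -s * 2) rfl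
  have hsq : HasDerivAt (fun a => Real.sqrt (Real.cos (2 * (a - α₀))))
      ((-s * 2) / (2 * Real.sqrt c)) α := hg.sqrt hcne
  have hinv : HasDerivAt (fun a => (Real.sqrt (Real.cos (2 * (a - α₀))))⁻¹)
      (-((-s * 2) / (2 * Real.sqrt c)) / Real.sqrt c ^ 2) α := hsq.inv hsc
  have hrr : HasDerivAt (fun a => rr d α₀ a)
      (Real.sqrt d * (-((-s * 2) / (2 * Real.sqrt c)) / Real.sqrt c ^ 2)) α := by
    have heq : (fun a => rr d α₀ a)
        = fun a => Real.sqrt d * (Real.sqrt (Real.cos (2 * (a - α₀))))⁻¹ := by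
      funext a
      rw [rr, Real.sqrt_div hd.le, div_eq_mul_inv]
    rw [heq]
    exact hinv.const_mul _
  have hv := hasDerivAt_vv α β
  have hD : HasDerivAt (fun a => U d α₀ a β)
      (rr d α₀ α • vp α β +
        (Real.sqrt d * (-((-s * 2) / (2 * Real.sqrt c)) / Real.sqrt c ^ 2)) • vv α β) α := by
    exact hrr.smul hv
  rw [hD.deriv]
  rw [smul_add, smul_smul, smul_smul]
  have hA : Real.sqrt d * (-((-s * 2) / (2 * Real.sqrt c)) / Real.sqrt c ^ 2)
      = Real.sqrt d / (Real.sqrt c * c) * s := by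
    have h2 : Real.sqrt c ^ 2 = c := Real.sq_sqrt hc.le
    have h3 : s * Real.sqrt c ^ 2 = s * c := by rw [h2]
    field_simp
    nlinarith [h2, Real.sqrt_nonneg d, h3]
  have hB : rr d α₀ α = Real.sqrt d / (Real.sqrt c * c) * c := by
    rw [rr, ← hcdef, Real.sqrt_div hd.le]
    field_simp
  rw [hA, hB]
  abel

lemma N_smul (m : ℝ) (hm : 0 < m) (w : EuclideanSpace ℝ (Fin 4)) : N (m • w) = N w := by
  rw [N, N, norm_smul, Real.norm_eq_abs, abs_of_pos hm, mul_inv, mul_smul]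
  rw [smul_smul, smul_smul]
  congr 1
  rw [mul_comm, ← mul_assoc, mul_inv_cancel₀ (ne_of_gt hm), one_mul]

lemma N_of_norm_one (w : EuclideanSpace ℝ (Fin 4)) (hw : ‖w‖ = 1) : N w = w := by
  rw [N, hw]; simp

theorem stmt_14 (d : ℝ) (hd : 0 < d) (α₁ α α₂ : ℝ)
    (h₁ : α₁ ≤ α) (h₂ : α ≤ α₂) (hmid : α - α₁ = α₂ - α)
    (hlt : α - α₁ < π / 4) (β : ℝ) :
    U d α₁ α β = U d α₂ α β ∧
    N (deriv (fun a => U d α₁ a β) α) - N (deriv (fun a => U d α₂ a β) α)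
      = (2 * Real.sin (2 * (α - α₁))) • N (U d α₁ α β) := by
  have hneg : α - α₂ = -(α - α₁) := by linarith
  have hcoseq : Real.cos (2 * (α - α₂)) = Real.cos (2 * (α - α₁)) := by
    rw [hneg]; rw [mul_neg, Real.cos_neg]
  have hsineq : Real.sin (2 * (α - α₂)) = -Real.sin (2 * (α - α₁)) := by
    rw [hneg]; rw [mul_neg, Real.sin_neg]
  set c := Real.cos (2 * (α - α₁)) with hcdef
  set s := Real.sin (2 * (α - α₁)) with hsdef
  have hc : 0 < c := by
    apply Real.cos_pos_of_mem_Ioo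
    constructor <;> [linarith [Real.pi_pos]; linarith]
  have hsc : 0 < Real.sqrt c := Real.sqrt_pos.mpr hc
  have hm : 0 < Real.sqrt d / (Real.sqrt c * c) := by positivity
  have hs2c2 : s ^ 2 + c ^ 2 = 1 := Real.sin_sq_add_cos_sq _
  have hN1 : N (deriv (fun a => U d α₁ a β) α) = s • vv α β + c • vp α β := by
    rw [deriv_U d α₁ α β hd hc, N_smul _ hm, N_of_norm_one]
    rw [normv, hs2c2, Real.sqrt_one]
  have hN2 : N (deriv (fun a => U d α₂ a β) α) = (-s) • vv α β + c • vp α β := by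
    rw [deriv_U d α₂ α β hd (hcoseq ▸ hc), hcoseq, hsineq]
    rw [N_smul _ hm, N_of_norm_one]
    rw [normv]
    rw [show (-s) ^ 2 + c ^ 2 = 1 by nlinarith, Real.sqrt_one]
  have hrrpos : 0 < rr d α₁ α := by
    rw [rr, ← hcdef]
    positivity
  have hNU : N (U d α₁ α β) = vv α β := by
    rw [U_eq, N_smul _ hrrpos, N_of_norm_one]
    have := normv 1 0 α β
    simpa using this
  constructor
  · rw [U_eq, U_eq]
    congr 1
    rw [rr, rr, hcoseq]
  · rw [hN1, hN2, hNU]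
    rw [neg_smul]
    rw [show (2 * s) • vv α β = s • vv α β + s • vv α β by rw [← add_smul]; ring_nf]
    abel
end
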